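/- (Uniqueness for the SIR system) Let β, γ ∈ ℝ, let t₀ < t₁ be real numbers, and let x, y : ℝ → ℝ³ be continuous on [t₀, t₁] and such that, at every t ∈ [t₀, t₁], x (resp. y) has derivative f_{β,γ}(x(t)) (resp. f_{β,γ}(y(t))) within [t₀, t₁]. If x(t₀) = y(t₀), then x(t) = y(t) for every t ∈ [t₀, t₁]. -/

import Mathlib

lemma sir_coord_le (u : EuclideanSpace ℝ (Fin 3)) (i : Fin 3) : |u i| ≤ ‖u‖ := by
  rw [EuclideanSpace.norm_eq]
  rw [show |u i| = Real.sqrt (‖u i‖^2) by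
    rw [Real.sqrt_sq (norm_nonneg _), Real.norm_eq_abs]]
  exact Real.sqrt_le_sqrt (Finset.single_le_sum (fun j _ => sq_nonneg ‖u j‖) (Finset.mem_univ i))

lemma sir_norm_le3 (u : EuclideanSpace ℝ (Fin 3)) : ‖u‖ ≤ |u 0| + |u 1| + |u 2| := by
  rw [EuclideanSpace.norm_eq, Fin.sum_univ_three]
  have h0 : (0:ℝ) ≤ |u 0| + |u 1| + |u 2| := by positivity
  rw [show (|u 0| + |u 1| + |u 2|) = Real.sqrt ((|u 0| + |u 1| + |u 2|)^2) from
    (Real.sqrt_sq h0).symm]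
  apply Real.sqrt_le_sqrt
  simp only [Real.norm_eq_abs]
  nlinarith [abs_nonneg (u 0), abs_nonneg (u 1), abs_nonneg (u 2),
    sq_abs (u 0), sq_abs (u 1), sq_abs (u 2)]

/-- Uniqueness for the SIR system: two solutions of
`x' = f_{β,γ}(x)` on `[t₀, t₁]` with the same initial value at `t₀` coincide on
the whole interval `[t₀, t₁]`. -/
theorem sir_uniqueness
    (f : ℝ → ℝ → EuclideanSpace ℝ (Fin 3) → EuclideanSpace ℝ (Fin 3))
    (hf : ∀ (β γ : ℝ) (x : EuclideanSpace ℝ (Fin 3)),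
      f β γ x 0 = -β * x 0 * x 1 ∧
      f β γ x 1 = β * x 0 * x 1 - γ * x 1 ∧
      f β γ x 2 = γ * x 1)
    (β γ t₀ t₁ : ℝ) (h01 : t₀ < t₁)
    (x y : ℝ → EuclideanSpace ℝ (Fin 3))
    (hxc : ContinuousOn x (Set.Icc t₀ t₁))
    (hyc : ContinuousOn y (Set.Icc t₀ t₁))
    (hx : ∀ t ∈ Set.Icc t₀ t₁,
      HasDerivWithinAt x (f β γ (x t)) (Set.Icc t₀ t₁) t)
    (hy : ∀ t ∈ Set.Icc t₀ t₁,
      HasDerivWithinAt y (f β γ (y t)) (Set.Icc t₀ t₁) t)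
    (h0 : x t₀ = y t₀) :
    ∀ t ∈ Set.Icc t₀ t₁, x t = y t := by
  -- a compact set containing both trajectories
  have hK : IsCompact (x '' Set.Icc t₀ t₁ ∪ y '' Set.Icc t₀ t₁) :=
    ((isCompact_Icc.image_of_continuousOn hxc).union
      (isCompact_Icc.image_of_continuousOn hyc))
  obtain ⟨R, hR0, hRsub⟩ := hK.isBounded.subset_closedBall_lt 0 0
  -- the vector field
  set v : EuclideanSpace ℝ (Fin 3) → EuclideanSpace ℝ (Fin 3) :=
    fun z => (WithLp.equiv 2 (Fin 3 → ℝ)).symm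
      ![-β * z 0 * z 1, β * z 0 * z 1 - γ * z 1, γ * z 1] with hv
  have hveq : ∀ z, f β γ z = v z := by
    intro z
    ext i
    fin_cases i <;>
      simp [hv, (hf β γ z).1, (hf β γ z).2.1, (hf β γ z).2.2]
  -- v is Lipschitz on the closed ball
  set K : NNReal := Real.toNNReal (4 * |β| * R + 2 * |γ|) with hKdef
  have hlip : LipschitzOnWith K v (Metric.closedBall 0 R) := by
    apply LipschitzOnWith.of_dist_le_mul
    intro z hz w hw
    rw [dist_eq_norm, dist_eq_norm]
    have hz' : ‖z‖ ≤ R := by rwa [Metric.mem_closedBall, dist_zero_right] at hz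
    have hw' : ‖w‖ ≤ R := by rwa [Metric.mem_closedBall, dist_zero_right] at hw
    have hz0 : |z 0| ≤ R := (sir_coord_le z 0).trans hz'
    have hz1 : |z 1| ≤ R := (sir_coord_le z 1).trans hz'
    have hw0 : |w 0| ≤ R := (sir_coord_le w 0).trans hw'
    have hw1 : |w 1| ≤ R := (sir_coord_le w 1).trans hw'
    have hd0 : |z 0 - w 0| ≤ ‖z - w‖ := by
      simpa using sir_coord_le (z - w) 0
    have hd1 : |z 1 - w 1| ≤ ‖z - w‖ := by
      simpa using sir_coord_le (z - w) 1
    have hnn : (0:ℝ) ≤ 4 * |β| * R + 2 * |γ| := by positivity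
    have hKcoe : (K : ℝ) = 4 * |β| * R + 2 * |γ| := Real.coe_toNNReal _ hnn
    rw [hKcoe]
    refine (sir_norm_le3 (v z - v w)).trans ?_
    have e0 : (v z - v w) 0 = -β * z 0 * z 1 - (-β * w 0 * w 1) := by simp [hv]
    have e1 : (v z - v w) 1 =
        (β * z 0 * z 1 - γ * z 1) - (β * w 0 * w 1 - γ * w 1) := by simp [hv]
    have e2 : (v z - v w) 2 = γ * z 1 - γ * w 1 := by simp [hv]
    rw [e0, e1, e2]
    have key : ∀ a b c d : ℝ, |a| ≤ R → |d| ≤ R → |a - c| ≤ ‖z - w‖ →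
        |b - d| ≤ ‖z - w‖ → |a * b - c * d| ≤ 2 * R * ‖z - w‖ := by
      intro a b c d ha hd hac hbd
      have : a * b - c * d = a * (b - d) + d * (a - c) := by ring
      rw [this]
      calc |a * (b - d) + d * (a - c)| ≤ |a * (b - d)| + |d * (a - c)| := abs_add_le _ _
        _ = |a| * |b - d| + |d| * |a - c| := by rw [abs_mul, abs_mul]
        _ ≤ R * ‖z - w‖ + R * ‖z - w‖ := by
            gcongr <;> first | exact (abs_nonneg _).trans hac | assumption
        _ = 2 * R * ‖z - w‖ := by ring
    have hmul : |z 0 * z 1 - w 0 * w 1| ≤ 2 * R * ‖z - w‖ :=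
      key (z 0) (z 1) (w 0) (w 1) hz0 hw1 hd0 hd1
    have h1 : |-β * z 0 * z 1 - -β * w 0 * w 1| ≤ |β| * (2 * R * ‖z - w‖) := by
      have : -β * z 0 * z 1 - -β * w 0 * w 1 = -β * (z 0 * z 1 - w 0 * w 1) := by ring
      rw [this, abs_mul, abs_neg]
      exact mul_le_mul_of_nonneg_left hmul (abs_nonneg β)
    have h2 : |(β * z 0 * z 1 - γ * z 1) - (β * w 0 * w 1 - γ * w 1)| ≤
        |β| * (2 * R * ‖z - w‖) + |γ| * ‖z - w‖ := by
      have heq : (β * z 0 * z 1 - γ * z 1) - (β * w 0 * w 1 - γ * w 1) =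
          β * (z 0 * z 1 - w 0 * w 1) + (-γ) * (z 1 - w 1) := by ring
      rw [heq]
      calc |β * (z 0 * z 1 - w 0 * w 1) + (-γ) * (z 1 - w 1)|
          ≤ |β * (z 0 * z 1 - w 0 * w 1)| + |(-γ) * (z 1 - w 1)| := abs_add_le _ _
        _ = |β| * |z 0 * z 1 - w 0 * w 1| + |γ| * |z 1 - w 1| := by
            rw [abs_mul, abs_mul, abs_neg]
        _ ≤ |β| * (2 * R * ‖z - w‖) + |γ| * ‖z - w‖ :=
            add_le_add (mul_le_mul_of_nonneg_left hmul (abs_nonneg β))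
              (mul_le_mul_of_nonneg_left hd1 (abs_nonneg γ))
    have h3 : |γ * z 1 - γ * w 1| ≤ |γ| * ‖z - w‖ := by
      have : γ * z 1 - γ * w 1 = γ * (z 1 - w 1) := by ring
      rw [this, abs_mul]
      exact mul_le_mul_of_nonneg_left hd1 (abs_nonneg γ)
    nlinarith [norm_nonneg (z - w)]
  -- apply uniqueness
  have := ODE_solution_unique_of_mem_Icc_right
    (v := fun _ : ℝ => v) (s := fun _ : ℝ => Metric.closedBall (0 : EuclideanSpace ℝ (Fin 3)) R)
    (K := K) (fun _ _ => hlip) hxc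
    (fun t ht =>
      ((hveq (x t)) ▸ hx t (Set.Ico_subset_Icc_self ht)).mono_of_mem_nhdsWithin
        (Icc_mem_nhdsGE_of_mem ht))
    (fun t ht => hRsub (Set.mem_union_left _ ⟨t, Set.Ico_subset_Icc_self ht, rfl⟩))
    hyc
    (fun t ht =>
      ((hveq (y t)) ▸ hy t (Set.Ico_subset_Icc_self ht)).mono_of_mem_nhdsWithin
        (Icc_mem_nhdsGE_of_mem ht))
    (fun t ht => hRsub (Set.mem_union_right _ ⟨t, Set.Ico_subset_Icc_self ht, rfl⟩))
    h0
  exact fun t ht => this ht
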